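/- Under the setup of the previous statement, the symmetric matrix Σ_tot = L Lᵀ + σ² I + ρ δ δᵀ satisfies λ_{k+1}(Σ_tot) − λ_{k+2}(Σ_tot) ≥ (C_φ/2)·min(Δ_k², m²), where λ_j denotes the j-th largest eigenvalue. -/

import Mathlib

open Matrix


lemma mulVec_dot {p q : ℕ} (Q : Matrix (Fin p) (Fin q) ℝ) (x : Fin q → ℝ) (w : Fin p → ℝ) :
    (Q *ᵥ x) ⬝ᵥ w = x ⬝ᵥ (Qᵀ *ᵥ w) := by
  rw [dotProduct_comm, dotProduct_mulVec, dotProduct_comm, mulVec_transpose]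

lemma dot_self_nonneg {p : ℕ} (v : Fin p → ℝ) : 0 ≤ v ⬝ᵥ v :=
  Finset.sum_nonneg fun i _ => mul_self_nonneg (v i)

lemma dot_self_pos {p : ℕ} {v : Fin p → ℝ} (hv : v ≠ 0) : 0 < v ⬝ᵥ v := by
  rcases (dot_self_nonneg v).lt_or_eq with h | h
  · exact h
  · exact absurd (dotProduct_self_eq_zero.mp h.symm) hv

lemma col_span_eq {p k : ℕ} (L : Matrix (Fin p) (Fin k) ℝ) :
    Submodule.span ℝ (Set.range fun j : Fin k => fun i => L i j)
      = LinearMap.range L.mulVecLin := by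
  rw [Matrix.range_mulVecLin]
  rfl

lemma L_inj {p k : ℕ} (L : Matrix (Fin p) (Fin k) ℝ) (hrank : L.rank = k) :
    Function.Injective L.mulVecLin := by
  rw [← LinearMap.ker_eq_bot, ← Submodule.finrank_eq_zero]
  have h := LinearMap.finrank_range_add_finrank_ker L.mulVecLin
  rw [Module.finrank_pi] at h
  have hr : Module.finrank ℝ (LinearMap.range L.mulVecLin) = k := hrank
  rw [hr, Fintype.card_fin] at h
  omega

lemma LtL_isUnit {p k : ℕ} (L : Matrix (Fin p) (Fin k) ℝ) (hrank : L.rank = k) :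
    IsUnit (Lᵀ * L) := by
  rw [← Matrix.mulVec_injective_iff_isUnit]
  intro x₁ x₂ hx
  have hd : (Lᵀ * L) *ᵥ (x₁ - x₂) = 0 := by
    rw [Matrix.mulVec_sub, hx, sub_self]
  have h0 : (L *ᵥ (x₁ - x₂)) ⬝ᵥ (L *ᵥ (x₁ - x₂)) = 0 := by
    rw [mulVec_dot, mulVec_mulVec, hd, dotProduct_zero]
  have := dotProduct_self_eq_zero.mp h0
  have := L_inj L hrank (a₁ := x₁ - x₂) (a₂ := 0) (by simpa using this)
  rwa [sub_eq_zero] at this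

lemma scalar_core (D E U2 s a ρ Cφ M Δ : ℝ) (hD : 0 < D) (hρ : 0 < ρ)
    (hCφ : 0 < Cφ) (hC1 : Cφ ≤ 1) (hE1 : Cφ * D ≤ E) (hE2 : E ≤ D)
    (hU2 : 0 ≤ U2) (hs : s ^ 2 ≤ (D - E) * U2) (hT : 0 ≤ Δ * U2)
    (hMΔ : M ≤ Δ) (hMρ : M ≤ ρ * D) (hM0 : 0 ≤ M) :
    Cφ / 2 * M * (U2 + a ^ 2 * E) ≤ Δ * U2 + ρ * (s + a * E) ^ 2 := by
  have hE0 : 0 ≤ E := le_trans (by positivity) hE1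
  rcases eq_or_lt_of_le hM0 with h0 | hM
  · have : Cφ / 2 * M * (U2 + a ^ 2 * E) = 0 := by rw [← h0]; ring
    rw [this]
    positivity
  have key : Cφ / 2 * (U2 + a ^ 2 * E) * D ≤ D * U2 + (s + a * E) ^ 2 := by
    have h1 : s ^ 2 ≤ (1 - Cφ / 2) * (D * U2) := by nlinarith [mul_le_mul_of_nonneg_right hE1 hU2]
    nlinarith [sq_nonneg (a * E + 2 * s), mul_le_mul_of_nonneg_right hE1 (mul_nonneg (sq_nonneg a) hE0)]
  have h2 : M / D * (s + a * E) ^ 2 ≤ ρ * (s + a * E) ^ 2 := by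
    apply mul_le_mul_of_nonneg_right _ (sq_nonneg _)
    rw [div_le_iff₀ hD]
    nlinarith
  have h3 : M * U2 ≤ Δ * U2 := mul_le_mul_of_nonneg_right hMΔ hU2
  have h4 : Cφ / 2 * M * (U2 + a ^ 2 * E) ≤ M * U2 + M / D * (s + a * E) ^ 2 := by
    rw [← mul_le_mul_iff_of_pos_right hD]
    have expand : (M * U2 + M / D * (s + a * E) ^ 2) * D = M * (D * U2 + (s + a * E) ^ 2) := by
      field_simp
    rw [expand]
    nlinarith [mul_le_mul_of_nonneg_left key hM0]
  linarith

lemma eigmin {p k : ℕ} (L : Matrix (Fin p) (Fin k) ℝ) (Δsq : ℝ)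
    (hΔsq : Δsq = ⨅ i, (Matrix.isHermitian_conjTranspose_mul_self L).eigenvalues i)
    (y : Fin k → ℝ) :
    Δsq * ((L *ᵥ y) ⬝ᵥ (L *ᵥ y)) ≤ ((Lᵀ * L) *ᵥ y) ⬝ᵥ ((Lᵀ * L) *ᵥ y) := by
  set h := Matrix.isHermitian_conjTranspose_mul_self L with hh
  set e := h.eigenvalues with he
  set U : Matrix (Fin k) (Fin k) ℝ := (h.eigenvectorUnitary : Matrix (Fin k) (Fin k) ℝ) with hU
  have hUU : Uᵀ * U = 1 := h.eigenvectorUnitary.prop.1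
  have hspec : Lᵀ * L = U * diagonal e * Uᵀ := by
    have := h.spectral_theorem
    rw [Unitary.conjStarAlgAut_apply, Matrix.star_eq_conjTranspose,
      RCLike.ofReal_real_eq_id, Function.id_comp] at this
    rw [← Matrix.conjTranspose_eq_transpose_of_trivial, ← Matrix.conjTranspose_eq_transpose_of_trivial]
    exact this
  set z := Uᵀ *ᵥ y with hz
  have hUdot : ∀ (w w' : Fin k → ℝ), (U *ᵥ w) ⬝ᵥ (U *ᵥ w') = w ⬝ᵥ w' := by
    intro w w'
    rw [mulVec_dot, mulVec_mulVec, hUU, one_mulVec]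
  have hmv : (Lᵀ * L) *ᵥ y = U *ᵥ (diagonal e *ᵥ z) := by
    rw [hspec, hz, mulVec_mulVec, mulVec_mulVec]
  have h1 : (L *ᵥ y) ⬝ᵥ (L *ᵥ y) = z ⬝ᵥ (diagonal e *ᵥ z) := by
    rw [mulVec_dot, mulVec_mulVec, hmv, dotProduct_comm, mulVec_dot, ← hz, dotProduct_comm]
  have h2 : ((Lᵀ * L) *ᵥ y) ⬝ᵥ ((Lᵀ * L) *ᵥ y)
      = (diagonal e *ᵥ z) ⬝ᵥ (diagonal e *ᵥ z) := by
    rw [hmv, hUdot]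
  rw [h1, h2]
  have hd : ∀ i, (diagonal e *ᵥ z) i = e i * z i := fun i => mulVec_diagonal e z i
  have hsum1 : z ⬝ᵥ (diagonal e *ᵥ z) = ∑ i, e i * z i ^ 2 := by
    simp [dotProduct, hd]; apply Finset.sum_congr rfl; intro i _; ring
  have hsum2 : (diagonal e *ᵥ z) ⬝ᵥ (diagonal e *ᵥ z) = ∑ i, (e i * z i) ^ 2 := by
    simp [dotProduct, hd]; apply Finset.sum_congr rfl; intro i _; ring
  rw [hsum1, hsum2, Finset.mul_sum]
  apply Finset.sum_le_sum
  intro i _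
  have hei : 0 ≤ e i := Matrix.eigenvalues_conjTranspose_mul_self_nonneg L i
  have hΔi : Δsq ≤ e i := by
    rw [hΔsq]
    exact ciInf_le (Finite.bddBelow_range _) i
  nlinarith [sq_nonneg (z i), mul_nonneg (sub_nonneg.2 hΔi) hei]

lemma key_quad {p k : ℕ} (L : Matrix (Fin p) (Fin k) ℝ) (δ : Fin p → ℝ) (hδ : δ ≠ 0)
    (ρ Cφ : ℝ) (hρ : 0 < ρ) (hCφ : 0 < Cφ) (hrank : L.rank = k)
    (hangle : ∀ w ∈ Submodule.span ℝ (Set.range fun j : Fin k => fun i => L i j),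
      Cφ * (δ ⬝ᵥ δ) ≤ (δ - w) ⬝ᵥ (δ - w))
    (Δsq : ℝ)
    (hΔsq : Δsq = ⨅ i, (Matrix.isHermitian_conjTranspose_mul_self L).eigenvalues i)
    (v : Fin p → ℝ)
    (hv : v ∈ Submodule.span ℝ (insert δ (Set.range fun j : Fin k => fun i => L i j))) :
    Cφ / 2 * min Δsq (ρ * (δ ⬝ᵥ δ)) * (v ⬝ᵥ v)
      ≤ (Lᵀ *ᵥ v) ⬝ᵥ (Lᵀ *ᵥ v) + ρ * (δ ⬝ᵥ v) ^ 2 := by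
  have hD : 0 < δ ⬝ᵥ δ := dot_self_pos hδ
  set D := δ ⬝ᵥ δ with hDdef
  -- Δsq is nonneg
  have hΔ0 : 0 ≤ Δsq := by
    rw [hΔsq]
    exact Real.iInf_nonneg fun i => Matrix.eigenvalues_conjTranspose_mul_self_nonneg L i
  -- solve for projection
  obtain ⟨y₀, hy₀⟩ := (Matrix.mulVec_surjective_iff_isUnit.2 (LtL_isUnit L hrank)) (Lᵀ *ᵥ δ)
  set w : Fin p → ℝ := L *ᵥ y₀ with hwdef
  set δp : Fin p → ℝ := δ - w with hδpdef
  have hLδp : Lᵀ *ᵥ δp = 0 := by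
    rw [hδpdef, Matrix.mulVec_sub, hwdef, Matrix.mulVec_mulVec, hy₀, sub_self]
  have orth : ∀ y : Fin k → ℝ, (L *ᵥ y) ⬝ᵥ δp = 0 := by
    intro y
    rw [mulVec_dot, hLδp, dotProduct_zero]
  set E := δp ⬝ᵥ δp with hEdef
  have hwmem : w ∈ Submodule.span ℝ (Set.range fun j : Fin k => fun i => L i j) := by
    rw [col_span_eq]
    exact ⟨y₀, rfl⟩
  have hE1 : Cφ * D ≤ E := hangle w hwmem
  have hC1 : Cφ ≤ 1 := by
    have := hangle 0 (Submodule.zero_mem _)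
    simp only [sub_zero] at this
    rw [← mul_le_mul_iff_of_pos_right hD]
    simpa using this
  have hwδp : w ⬝ᵥ δp = 0 := orth y₀
  have hδsplit : δ = w + δp := by rw [hδpdef]; try abel
  have hDE : D = w ⬝ᵥ w + E := by
    calc D = (w + δp) ⬝ᵥ (w + δp) := by rw [← hδsplit]
    _ = w ⬝ᵥ w + w ⬝ᵥ δp + (δp ⬝ᵥ w + δp ⬝ᵥ δp) := by
        rw [add_dotProduct, dotProduct_add, dotProduct_add]; try ring
    _ = w ⬝ᵥ w + E := by rw [hwδp, dotProduct_comm δp w, hwδp]; ring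
  have hE2 : E ≤ D := by
    have := dot_self_nonneg w
    linarith [hDE]
  -- decompose v
  rw [Submodule.mem_span_insert] at hv
  obtain ⟨a, z, hzmem, rfl⟩ := hv
  rw [col_span_eq] at hzmem
  obtain ⟨y₁, rfl⟩ := hzmem
  set y : Fin k → ℝ := a • y₀ + y₁ with hydef
  set u : Fin p → ℝ := L *ᵥ y with hudef
  have hzeq : L.mulVecLin y₁ = L *ᵥ y₁ := rfl
  have hvdec : a • δ + L.mulVecLin y₁ = u + a • δp := by
    rw [hzeq, hudef, hydef, Matrix.mulVec_add, Matrix.mulVec_smul, hδpdef, hwdef]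
    module
  rw [hvdec]
  set vv : Fin p → ℝ := u + a • δp with hvvdef
  have huδp : u ⬝ᵥ δp = 0 := orth y
  have hδpu : δp ⬝ᵥ u = 0 := by rw [dotProduct_comm]; exact huδp
  have hvv : vv ⬝ᵥ vv = u ⬝ᵥ u + a ^ 2 * E := by
    rw [hvvdef, hEdef]
    simp only [add_dotProduct, dotProduct_add, smul_dotProduct, dotProduct_smul,
      smul_eq_mul, huδp, hδpu, mul_zero, add_zero, zero_add]
    ring
  have hwδp' : δp ⬝ᵥ w = 0 := by rw [dotProduct_comm]; exact hwδp
  have hδv : δ ⬝ᵥ vv = w ⬝ᵥ u + a * E := by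
    rw [hδsplit, hvvdef, hEdef]
    simp only [add_dotProduct, dotProduct_add, smul_dotProduct, dotProduct_smul,
      smul_eq_mul, huδp, hδpu, hwδp, mul_zero, add_zero, zero_add]
    try ring
  have hLv : Lᵀ *ᵥ vv = Lᵀ *ᵥ u := by
    rw [hvvdef, Matrix.mulVec_add, Matrix.mulVec_smul, hLδp, smul_zero, add_zero]
  -- Cauchy-Schwarz
  have hcs : (w ⬝ᵥ u) ^ 2 ≤ (w ⬝ᵥ w) * (u ⬝ᵥ u) := by
    have := Finset.sum_mul_sq_le_sq_mul_sq Finset.univ w u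
    simpa [dotProduct, sq] using this
  have heig : Δsq * (u ⬝ᵥ u) ≤ (Lᵀ *ᵥ u) ⬝ᵥ (Lᵀ *ᵥ u) := by
    have := eigmin L Δsq hΔsq y
    rw [← Matrix.mulVec_mulVec] at this
    exact this
  have hU2 : 0 ≤ u ⬝ᵥ u := dot_self_nonneg u
  have hs : (w ⬝ᵥ u) ^ 2 ≤ (D - E) * (u ⬝ᵥ u) := by
    have hww : w ⬝ᵥ w = D - E := by linarith [hDE]
    rwa [hww] at hcs
  have main := scalar_core D E (u ⬝ᵥ u) (w ⬝ᵥ u) a ρ Cφ (min Δsq (ρ * D)) Δsq hD hρ hCφ hC1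
    hE1 hE2 hU2 hs (mul_nonneg hΔ0 hU2) (min_le_left _ _) (min_le_right _ _)
    (le_min hΔ0 (by positivity))
  rw [hvv, hδv, hLv]
  calc Cφ / 2 * min Δsq (ρ * D) * (u ⬝ᵥ u + a ^ 2 * E)
      ≤ Δsq * (u ⬝ᵥ u) + ρ * (w ⬝ᵥ u + a * E) ^ 2 := main
    _ ≤ (Lᵀ *ᵥ u) ⬝ᵥ (Lᵀ *ᵥ u) + ρ * (w ⬝ᵥ u + a * E) ^ 2 := by linarith

lemma vecMulVec_mulVec' {p : ℕ} (δ x : Fin p → ℝ) :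
    vecMulVec δ δ *ᵥ x = (δ ⬝ᵥ x) • δ := by
  funext j
  simp only [Matrix.mulVec, dotProduct, Matrix.vecMulVec_apply, Pi.smul_apply,
    smul_eq_mul, Finset.sum_mul]
  exact Finset.sum_congr rfl fun l _ => by ring

set_option maxHeartbeats 1000000 in
/-- Lemma S.5: the eigengap of `Σ_tot = L Lᵀ + σ² I + ρ δ δᵀ` between its
`(k+1)`-st and `(k+2)`-nd largest eigenvalues is at least `(C_φ/2) min(Δ_k², m²)`.
The eigenvalues `μ` (in descending order) are encoded via an orthogonal
diagonalization; with 0-based indexing the gap is `μ k − μ (k+1)`. -/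
theorem stmt_4 {p k : ℕ} (hp : k + 2 ≤ p)
    (L : Matrix (Fin p) (Fin k) ℝ) (δ : Fin p → ℝ) (hδ : δ ≠ 0)
    (ρ Cφ σ : ℝ) (hρ : 0 < ρ) (hCφ : 0 < Cφ)
    (hrank : L.rank = k)
    (hdim : Module.finrank ℝ
        (Submodule.span ℝ (insert δ (Set.range fun j : Fin k => fun i => L i j))
          : Submodule ℝ (Fin p → ℝ)) = k + 1)
    (hangle : ∀ w ∈ Submodule.span ℝ (Set.range fun j : Fin k => fun i => L i j),
      Cφ * (δ ⬝ᵥ δ) ≤ (δ - w) ⬝ᵥ (δ - w))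
    (Δsq : ℝ)
    (hΔsq : Δsq = ⨅ i, (Matrix.isHermitian_conjTranspose_mul_self L).eigenvalues i)
    (μ : Fin p → ℝ) (R : Matrix (Fin p) (Fin p) ℝ)
    (hR1 : Rᵀ * R = 1) (hR2 : R * Rᵀ = 1)
    (hdiag : Rᵀ * (L * Lᵀ + σ ^ 2 • (1 : Matrix (Fin p) (Fin p) ℝ)
        + ρ • vecMulVec δ δ) * R = Matrix.diagonal μ)
    (hμ_mono : Antitone μ) :
    Cφ / 2 * min Δsq (ρ * (δ ⬝ᵥ δ)) ≤
      μ ⟨k, by omega⟩ - μ ⟨k + 1, by omega⟩ := by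
  set A : Matrix (Fin p) (Fin p) ℝ := L * Lᵀ + ρ • vecMulVec δ δ with hAdef
  set ν : Fin p → ℝ := fun i => μ i - σ ^ 2 with hνdef
  set W₁ : Submodule ℝ (Fin p → ℝ) :=
    Submodule.span ℝ (insert δ (Set.range fun j : Fin k => fun i => L i j)) with hWdef
  set c : ℝ := Cφ / 2 * min Δsq (ρ * (δ ⬝ᵥ δ)) with hcdef
  -- diagonalization of A
  have hdiagA : Rᵀ * A * R = diagonal ν := by
    have hSplit : L * Lᵀ + σ ^ 2 • (1 : Matrix (Fin p) (Fin p) ℝ) + ρ • vecMulVec δ δ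
        = A + σ ^ 2 • (1 : Matrix (Fin p) (Fin p) ℝ) := by rw [hAdef]; abel
    rw [hSplit] at hdiag
    have hexp : Rᵀ * (A + σ ^ 2 • (1 : Matrix (Fin p) (Fin p) ℝ)) * R
        = Rᵀ * A * R + σ ^ 2 • (1 : Matrix (Fin p) (Fin p) ℝ) := by
      rw [Matrix.mul_add, Matrix.add_mul, Matrix.mul_smul, Matrix.mul_one, Matrix.smul_mul, hR1]
    rw [hexp] at hdiag
    have : Rᵀ * A * R = diagonal μ - σ ^ 2 • (1 : Matrix (Fin p) (Fin p) ℝ) := by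
      rw [← hdiag]; abel
    rw [this]
    ext i j
    rcases eq_or_ne i j with rfl | hij
    · simp [Matrix.diagonal_apply_eq, Matrix.one_apply_eq, hνdef]
    · simp [Matrix.diagonal_apply_ne _ hij, Matrix.one_apply_ne hij]
  have hARmat : A * R = R * diagonal ν := by
    calc A * R = (R * Rᵀ) * (A * R) := by rw [hR2, Matrix.one_mul]
    _ = R * (Rᵀ * A * R) := by rw [Matrix.mul_assoc R Rᵀ (A * R), ← Matrix.mul_assoc Rᵀ A R]
    _ = R * diagonal ν := by rw [hdiagA]
  have hAR : ∀ i : Fin p, A *ᵥ Rᵀ i = ν i • Rᵀ i := by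
    intro i
    funext j
    have h1 := congrFun (congrFun hARmat j) i
    have h2 : (A * R) j i = (A *ᵥ Rᵀ i) j := by
      simp [Matrix.mul_apply, Matrix.mulVec, dotProduct]
    have h3 : (R * diagonal ν) j i = (ν i • Rᵀ i) j := by
      rw [Matrix.mul_diagonal]
      simp [mul_comm]
    rw [h2, h3] at h1
    exact h1
  -- linear independence of columns of R
  have hUnitR : IsUnit R := by
    rw [Matrix.isUnit_iff_isUnit_det]
    have hdet : Rᵀ.det * R.det = 1 := by rw [← Matrix.det_mul, hR1, Matrix.det_one]
    exact IsUnit.of_mul_eq_one _ (by rwa [Matrix.det_transpose, mul_comm] at hdet)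
  have hli : LinearIndependent ℝ (fun i : Fin p => Rᵀ i) :=
    Matrix.linearIndependent_cols_iff_isUnit.mpr hUnitR
  -- A maps into W₁
  have hAexp : ∀ x : Fin p → ℝ, A *ᵥ x = L *ᵥ (Lᵀ *ᵥ x) + (ρ * (δ ⬝ᵥ x)) • δ := by
    intro x
    rw [hAdef, Matrix.add_mulVec, ← Matrix.mulVec_mulVec, Matrix.smul_mulVec,
      vecMulVec_mulVec', smul_smul]
  have hsubW : Submodule.span ℝ (Set.range fun j : Fin k => fun i => L i j) ≤ W₁ :=
    Submodule.span_mono (Set.subset_insert _ _)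
  have hδW : δ ∈ W₁ := Submodule.subset_span (Set.mem_insert δ _)
  have hAW : ∀ x : Fin p → ℝ, A *ᵥ x ∈ W₁ := by
    intro x
    rw [hAexp]
    apply Submodule.add_mem
    · apply hsubW
      rw [col_span_eq]
      exact ⟨Lᵀ *ᵥ x, rfl⟩
    · exact Submodule.smul_mem _ _ hδW
  have hν_anti : Antitone ν := fun i j hij => sub_le_sub_right (hμ_mono hij) _
  -- Step 1: ν (k+1) ≤ 0
  have step1 : ν ⟨k + 1, by omega⟩ ≤ 0 := by
    by_contra hpos
    push_neg at hpos
    set g : Fin (k + 2) → Fin p := Fin.castLE hp with hgdef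
    have hposall : ∀ t : Fin (k + 2), 0 < ν (g t) := by
      intro t
      refine lt_of_lt_of_le hpos (hν_anti ?_)
      simp only [hgdef, Fin.le_def, Fin.coe_castLE]
      omega
    have hmem : ∀ t : Fin (k + 2), Rᵀ (g t) ∈ W₁ := by
      intro t
      have h1 := hAR (g t)
      have h2 : Rᵀ (g t) = (ν (g t))⁻¹ • (A *ᵥ Rᵀ (g t)) := by
        rw [h1, inv_smul_smul₀ (ne_of_gt (hposall t))]
      rw [h2]
      exact Submodule.smul_mem _ _ (hAW _)
    have hli2 : LinearIndependent ℝ (fun t : Fin (k + 2) => Rᵀ (g t)) :=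
      hli.comp g (Fin.castLE_injective hp)
    have hspan_le : Submodule.span ℝ (Set.range fun t : Fin (k + 2) => Rᵀ (g t)) ≤ W₁ :=
      Submodule.span_le.mpr (by rintro _ ⟨t, rfl⟩; exact hmem t)
    have hcard : Module.finrank ℝ
        (Submodule.span ℝ (Set.range fun t : Fin (k + 2) => Rᵀ (g t))) = k + 2 := by
      rw [finrank_span_eq_card hli2, Fintype.card_fin]
    have := Submodule.finrank_mono hspan_le
    rw [hcard, hdim] at this
    omega
  -- Step 2: c ≤ ν k
  have step2 : c ≤ ν ⟨k, by omega⟩ := by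
    set f : Fin (p - k) → Fin p := fun t => ⟨k + t.val, by omega⟩ with hfdef
    have hfinj : Function.Injective f := by
      intro a b hab
      have : k + a.val = k + b.val := congrArg Fin.val hab
      exact Fin.ext (by omega)
    have hliS : LinearIndependent ℝ (fun t : Fin (p - k) => Rᵀ (f t)) := hli.comp f hfinj
    set S : Submodule ℝ (Fin p → ℝ) :=
      Submodule.span ℝ (Set.range fun t : Fin (p - k) => Rᵀ (f t)) with hSdef
    have hrkS : Module.finrank ℝ S = p - k := by
      rw [hSdef, finrank_span_eq_card hliS, Fintype.card_fin]
    have hfull : Module.finrank ℝ (Fin p → ℝ) = p := Module.finrank_fin_fun ℝ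
    have hsup := Submodule.finrank_sup_add_finrank_inf_eq S W₁
    have hsuple : Module.finrank ℝ ↥(S ⊔ W₁) ≤ p := by
      have h := Submodule.finrank_le (S ⊔ W₁)
      rwa [hfull] at h
    have hWrk : Module.finrank ℝ W₁ = k + 1 := hdim
    have hinfpos : 0 < Module.finrank ℝ ↥(S ⊓ W₁) := by omega
    have hne : S ⊓ W₁ ≠ ⊥ := by
      intro hbot
      rw [hbot, finrank_bot] at hinfpos
      omega
    obtain ⟨v, hvmem, hv0⟩ := Submodule.exists_mem_ne_zero_of_ne_bot hne
    have hvS : v ∈ S := hvmem.1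
    have hvW : v ∈ W₁ := hvmem.2
    set x : Fin p → ℝ := Rᵀ *ᵥ v with hxdef
    have hx : R *ᵥ x = v := by rw [hxdef, Matrix.mulVec_mulVec, hR2, Matrix.one_mulVec]
    have hx0 : ∀ i : Fin p, i.val < k → x i = 0 := by
      intro i hi
      rw [hxdef]
      refine Submodule.span_induction ?_ ?_ ?_ ?_ hvS
      · rintro _ ⟨t, rfl⟩
        show (Rᵀ *ᵥ Rᵀ (f t)) i = 0
        have hcol : Rᵀ (f t) = R *ᵥ Pi.single (f t) 1 := (Matrix.mulVec_single_one R (f t)).symm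
        rw [hcol, Matrix.mulVec_mulVec, hR1, Matrix.one_mulVec]
        have : i ≠ f t := by
          intro h
          have : i.val = k + t.val := by rw [h]
          omega
        exact Pi.single_eq_of_ne this 1
      · rw [Matrix.mulVec_zero]; rfl
      · intro a b _ _ ha hb
        rw [Matrix.mulVec_add]
        simp [ha, hb]
      · intro r a _ ha
        rw [Matrix.mulVec_smul]
        simp [ha]
    -- quadratic form identities
    have hquad : v ⬝ᵥ (A *ᵥ v) = ∑ i, ν i * x i ^ 2 := by
      conv_lhs => rw [← hx]
      rw [mulVec_dot, Matrix.mulVec_mulVec, Matrix.mulVec_mulVec, hdiagA]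
      simp only [dotProduct]
      refine Finset.sum_congr rfl fun i _ => ?_
      rw [Matrix.mulVec_diagonal]
      ring
    have hnorm : v ⬝ᵥ v = ∑ i, x i ^ 2 := by
      conv_lhs => rw [← hx]
      rw [mulVec_dot, Matrix.mulVec_mulVec, hR1, Matrix.one_mulVec]
      simp [dotProduct, sq]
    have hub : v ⬝ᵥ (A *ᵥ v) ≤ ν ⟨k, by omega⟩ * (v ⬝ᵥ v) := by
      rw [hquad, hnorm, Finset.mul_sum]
      apply Finset.sum_le_sum
      intro i _
      rcases lt_or_ge i.val k with h | h
      · rw [hx0 i h]; simp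
      · have : ν i ≤ ν ⟨k, by omega⟩ := hν_anti (by rw [Fin.le_def]; exact h)
        exact mul_le_mul_of_nonneg_right this (sq_nonneg _)
    have hAquad : v ⬝ᵥ (A *ᵥ v) = (Lᵀ *ᵥ v) ⬝ᵥ (Lᵀ *ᵥ v) + ρ * (δ ⬝ᵥ v) ^ 2 := by
      rw [hAexp, dotProduct_add, dotProduct_smul]
      have h1 : v ⬝ᵥ (L *ᵥ (Lᵀ *ᵥ v)) = (Lᵀ *ᵥ v) ⬝ᵥ (Lᵀ *ᵥ v) := by
        rw [dotProduct_comm, mulVec_dot]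
      have h2 : v ⬝ᵥ δ = δ ⬝ᵥ v := dotProduct_comm v δ
      rw [h1, h2]
      simp [sq]; ring
    have hlb : c * (v ⬝ᵥ v) ≤ v ⬝ᵥ (A *ᵥ v) := by
      rw [hAquad, hcdef]
      exact key_quad L δ hδ ρ Cφ hρ hCφ hrank hangle Δsq hΔsq v hvW
    have hvpos : 0 < v ⬝ᵥ v := dot_self_pos hv0
    have := le_trans hlb hub
    exact le_of_mul_le_mul_right this hvpos
  have : c ≤ ν ⟨k, by omega⟩ - ν ⟨k + 1, by omega⟩ := by linarith
  rw [hνdef] at this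
  simpa using this
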